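/- Let k ≥ 3 and n ≥ 4k be integers and let i ∈ {1, 2}. Then the spectral radius of K_i((n−k+i)/2, 0, 0) is the largest root of x³ − x² + (1−n)x + k − (i+1) = 0, and it is strictly less than (1/2)·√(4n − 2k − 4 + 2·√(5k² − 8kn + 4n² − 4k + 4)). -/

import Mathlib

open SimpleGraph

/-- The `l`-edge-connectivity of a graph: the minimum number of edges whose removal
leaves a graph with at least `l` connected components, if the graph has at least `l`
vertices; otherwise the number of vertices. -/
noncomputable def edgeConnL {V : Type*} (l : ℕ) (G : SimpleGraph V) : ℕ :=
  if l ≤ Nat.card V then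
    sInf {c : ℕ | ∃ F : Set (Sym2 V), F ⊆ G.edgeSet ∧ F.ncard = c ∧
      l ≤ Nat.card (G.deleteEdges F).ConnectedComponent}
  else Nat.card V

/-- A graph is minimally `(k,l)`-edge-connected if it is connected, its
`l`-edge-connectivity is at least `k`, and deleting any edge drops the
`l`-edge-connectivity below `k`. -/
def IsMinimallyKLEdgeConnected {V : Type*} (k l : ℕ) (G : SimpleGraph V) : Prop :=
  G.Connected ∧ k ≤ edgeConnL l G ∧
    ∀ e ∈ G.edgeSet, edgeConnL l (G.deleteEdges {e}) < k

/-- The real adjacency matrix of a simple graph. -/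
noncomputable def adjMat {V : Type*} (G : SimpleGraph V) : Matrix V V ℝ :=
  letI := Classical.decRel G.Adj
  G.adjMatrix ℝ

/-- The spectral radius of a graph: the largest (real) eigenvalue of its adjacency matrix. -/
noncomputable def specRad {V : Type*} [Fintype V] [DecidableEq V]
    (G : SimpleGraph V) : ℝ :=
  sSup (spectrum ℝ (adjMat G))

abbrev FriendPendV (t p : ℕ) : Type := Unit ⊕ ((Fin t × Fin 2) ⊕ Fin p)

/-- `F^{p}_{t}`: the graph obtained from the disjoint union of the star `K_{1,p}` and the
friendship graph consisting of `t` triangles sharing one common apex, by identifying the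
centre of the star with the apex.  Here `Sum.inl _` is the apex, `(i, _) : Fin t × Fin 2`
are the two outer vertices of the `i`-th triangle, and `Fin p` are the pendant vertices. -/
def FriendPend (t p : ℕ) : SimpleGraph (FriendPendV t p) :=
  SimpleGraph.fromRel (fun a b =>
    match a, b with
    | Sum.inl _, Sum.inr _ => True
    | Sum.inr (Sum.inl (i, _)), Sum.inr (Sum.inl (j, _)) => i = j
    | _, _ => False)

def relDecAux {t p : ℕ} : ∀ a b : FriendPendV t p, Decidable (match a, b with
    | Sum.inl _, Sum.inr _ => True
    | Sum.inr (Sum.inl (i, _)), Sum.inr (Sum.inl (j, _)) => i = j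
    | _, _ => False) := fun a b => by
  rcases a with _ | (⟨i, s⟩ | a) <;> rcases b with _ | (⟨j, s'⟩ | b) <;> dsimp <;> infer_instance

instance friendPendDecAdj {t p : ℕ} : DecidableRel (FriendPend t p).Adj := fun a b => by
  unfold FriendPend
  rw [SimpleGraph.fromRel_adj]
  exact @instDecidableAnd _ _ _ (@instDecidableOr _ _ (relDecAux a b) (relDecAux b a))

lemma fin2_succ_of_ne {s s' : Fin 2} (h : ¬ s = s') : s' = s + 1 := by
  revert h; revert s s'; decide

lemma fin2_ne_succ (s : Fin 2) : ¬ s = s + 1 := by revert s; decide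

lemma fin2_succ_succ (s : Fin 2) : s + 1 + 1 = s := by revert s; decide

lemma matrix_mem_spectrum_iff' {m : Type*} [Fintype m] [DecidableEq m]
    (A : Matrix m m ℝ) (μ : ℝ) :
    μ ∈ spectrum ℝ A ↔ ∃ v : m → ℝ, v ≠ 0 ∧ A.mulVec v = μ • v := by
  rw [← AlgEquiv.spectrum_eq (Matrix.toLinAlgEquiv' (n := m) (R := ℝ)) A,
    ← Module.End.hasEigenvalue_iff_mem_spectrum]
  constructor
  · intro h
    obtain ⟨v, hv1, hv2⟩ := h.exists_hasEigenvector
    refine ⟨v, hv2, ?_⟩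
    have := Module.End.mem_eigenspace_iff.mp hv1
    simpa [Matrix.toLinAlgEquiv'_apply] using this
  · rintro ⟨v, hv0, hv⟩
    exact Module.End.hasEigenvalue_of_hasEigenvector
      ⟨Module.End.mem_eigenspace_iff.mpr (by simpa [Matrix.toLinAlgEquiv'_apply] using hv), hv0⟩

section graph

variable {t p : ℕ}

lemma friendPend_adj_apex (x : (Fin t × Fin 2) ⊕ Fin p) :
    (FriendPend t p).Adj (Sum.inl ()) (Sum.inr x) := by
  simp [FriendPend, SimpleGraph.fromRel_adj]

lemma friendPend_adj_tri (i j : Fin t) (s s' : Fin 2) :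
    (FriendPend t p).Adj (Sum.inr (Sum.inl (i, s))) (Sum.inr (Sum.inl (j, s'))) ↔
      j = i ∧ s' = s + 1 := by
  simp only [FriendPend, SimpleGraph.fromRel_adj, ne_eq, Sum.inr.injEq, Sum.inl.injEq,
    Prod.mk.injEq]
  constructor
  · rintro ⟨hne, h | h⟩ <;>
    · subst h
      refine ⟨rfl, ?_⟩
      exact fin2_succ_of_ne fun hs => hne ⟨rfl, hs⟩
  · rintro ⟨rfl, rfl⟩
    refine ⟨?_, Or.inl rfl⟩
    rintro ⟨-, hs⟩
    exact fin2_ne_succ s hs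

lemma friendPend_not_adj_pp (a b : Fin p) :
    ¬ (FriendPend t p).Adj (Sum.inr (Sum.inr a)) (Sum.inr (Sum.inr b)) := by
  simp [FriendPend, SimpleGraph.fromRel_adj]

lemma friendPend_not_adj_tp (x : Fin t × Fin 2) (b : Fin p) :
    ¬ (FriendPend t p).Adj (Sum.inr (Sum.inl x)) (Sum.inr (Sum.inr b)) := by
  simp [FriendPend, SimpleGraph.fromRel_adj]

lemma adjMat_mulVec (v : FriendPendV t p → ℝ) (u : FriendPendV t p) :
    (adjMat (FriendPend t p)).mulVec v u =
      ∑ w : FriendPendV t p, (if (FriendPend t p).Adj u w then v w else 0) := by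
  classical
  unfold adjMat
  rw [Matrix.mulVec, dotProduct]
  refine Finset.sum_congr rfl fun w _ => ?_
  by_cases h : (FriendPend t p).Adj u w <;> simp [h]

lemma mulVec_apex (v : FriendPendV t p → ℝ) :
    (adjMat (FriendPend t p)).mulVec v (Sum.inl ()) =
      (∑ x : Fin t × Fin 2, v (Sum.inr (Sum.inl x))) + ∑ j : Fin p, v (Sum.inr (Sum.inr j)) := by
  classical
  rw [adjMat_mulVec, Fintype.sum_sum_type]
  have h1 : ∀ w : Unit, ¬ (FriendPend t p).Adj (Sum.inl ()) (Sum.inl w) := by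
    intro w; simp [FriendPend, SimpleGraph.fromRel_adj]
  simp [h1, friendPend_adj_apex]

lemma mulVec_pend (v : FriendPendV t p → ℝ) (j : Fin p) :
    (adjMat (FriendPend t p)).mulVec v (Sum.inr (Sum.inr j)) = v (Sum.inl ()) := by
  classical
  rw [adjMat_mulVec, Fintype.sum_sum_type, Fintype.sum_sum_type]
  have h1 : (FriendPend t p).Adj (Sum.inr (Sum.inr j)) (Sum.inl ()) :=
    ((FriendPend t p).adj_symm (friendPend_adj_apex _))
  have h2 : ∀ x : Fin t × Fin 2, ¬ (FriendPend t p).Adj (Sum.inr (Sum.inr j)) (Sum.inr (Sum.inl x)) := by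
    intro x h; exact friendPend_not_adj_tp x j (h.symm)
  have h3 : ∀ b : Fin p, ¬ (FriendPend t p).Adj (Sum.inr (Sum.inr j)) (Sum.inr (Sum.inr b)) :=
    fun b => friendPend_not_adj_pp j b
  simp [h1, h2, h3]

lemma mulVec_tri (v : FriendPendV t p → ℝ) (i : Fin t) (s : Fin 2) :
    (adjMat (FriendPend t p)).mulVec v (Sum.inr (Sum.inl (i, s))) =
      v (Sum.inl ()) + v (Sum.inr (Sum.inl (i, s + 1))) := by
  classical
  rw [adjMat_mulVec, Fintype.sum_sum_type, Fintype.sum_sum_type]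
  have h1 : (FriendPend t p).Adj (Sum.inr (Sum.inl (i, s))) (Sum.inl ()) :=
    ((FriendPend t p).adj_symm (friendPend_adj_apex _))
  have h3 : ∀ b : Fin p, ¬ (FriendPend t p).Adj (Sum.inr (Sum.inl (i, s))) (Sum.inr (Sum.inr b)) :=
    fun b => friendPend_not_adj_tp _ b
  have h2 : ∀ x : Fin t × Fin 2,
      (if (FriendPend t p).Adj (Sum.inr (Sum.inl (i, s))) (Sum.inr (Sum.inl x)) then
        v (Sum.inr (Sum.inl x)) else 0) =
      (if x = (i, s + 1) then v (Sum.inr (Sum.inl x)) else 0) := by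
    rintro ⟨j, s'⟩
    refine if_congr ?_ rfl rfl
    rw [friendPend_adj_tri, Prod.mk.injEq]
  simp only [h1, if_pos, h2, h3, if_neg, not_false_iff, Finset.sum_const_zero, add_zero]
  rw [Finset.sum_ite_eq' Finset.univ ((i, s+1) : Fin t × Fin 2) (fun x => v (Sum.inr (Sum.inl x)))]
  simp

end graph

lemma eigen_classify {t p : ℕ} (ht : 1 ≤ t) (μ : ℝ) (v : FriendPendV t p → ℝ)
    (hv0 : v ≠ 0) (hev : (adjMat (FriendPend t p)).mulVec v = μ • v) :
    μ^3 - μ^2 - (2*(t:ℝ) + (p:ℝ)) * μ + (p:ℝ) = 0 ∨ μ = 1 ∨ μ = -1 ∨ μ = 0 := by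
  set a : ℝ := v (Sum.inl ()) with ha_def
  have apex : (∑ x : Fin t × Fin 2, v (Sum.inr (Sum.inl x)))
      + ∑ j : Fin p, v (Sum.inr (Sum.inr j)) = μ * a := by
    have h := congrFun hev (Sum.inl ())
    rw [mulVec_apex] at h
    simpa using h
  have tri : ∀ (i : Fin t) (s : Fin 2),
      a + v (Sum.inr (Sum.inl (i, s + 1))) = μ * v (Sum.inr (Sum.inl (i, s))) := by
    intro i s
    have h := congrFun hev (Sum.inr (Sum.inl (i, s)))
    rw [mulVec_tri] at h
    simpa using h
  have pend : ∀ j : Fin p, a = μ * v (Sum.inr (Sum.inr j)) := by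
    intro j
    have h := congrFun hev (Sum.inr (Sum.inr j))
    rw [mulVec_pend] at h
    simpa using h
  have tri' : ∀ (i : Fin t) (s : Fin 2),
      a + v (Sum.inr (Sum.inl (i, s))) = μ * v (Sum.inr (Sum.inl (i, s + 1))) := by
    intro i s
    have h := tri i (s + 1)
    rwa [fin2_succ_succ] at h
  set i0 : Fin t := ⟨0, ht⟩ with hi0
  by_cases ha : a = 0
  · obtain ⟨u, hu⟩ := Function.ne_iff.mp hv0
    simp only [Pi.zero_apply] at hu
    rcases u with u | (⟨i, s⟩ | j)
    · cases u; exact absurd ha hu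
    · have e1 := tri i s
      have e2 := tri' i s
      have h12 : (μ^2 - 1) * v (Sum.inr (Sum.inl (i, s))) = 0 := by
        linear_combination -μ * e1 - e2 + (μ + 1) * ha
      rcases mul_eq_zero.mp h12 with h | h
      · have h' : (μ - 1) * (μ + 1) = 0 := by linear_combination h
        rcases mul_eq_zero.mp h' with h'' | h''
        · exact Or.inr (Or.inl (by linarith))
        · exact Or.inr (Or.inr (Or.inl (by linarith)))
      · exact absurd h hu
    · have h := pend j
      have h' : μ * v (Sum.inr (Sum.inr j)) = 0 := by linarith
      rcases mul_eq_zero.mp h' with h'' | h''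
      · exact Or.inr (Or.inr (Or.inr h''))
      · exact absurd h'' hu
  · have hμ1 : μ ≠ 1 := by
      intro h
      subst h
      have e1 := tri i0 0
      have e2 := tri' i0 0
      apply ha
      linarith
    have hμ0 : μ ≠ 0 := by
      intro h
      subst h
      rcases Nat.eq_zero_or_pos p with hp | hp
      · have hv : ∀ x : Fin t × Fin 2, v (Sum.inr (Sum.inl x)) = -a := by
          rintro ⟨i, s⟩
          have e := tri' i s
          linarith
        subst hp
        simp only [hv, Finset.sum_const, Finset.card_univ, Fintype.card_prod,
          Fintype.card_fin, Finset.univ_eq_empty, Finset.sum_empty, add_zero,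
          nsmul_eq_mul, zero_mul] at apex
        apply ha
        have ht' : (1:ℝ) ≤ (t:ℝ) := by exact_mod_cast ht
        push_cast at apex
        nlinarith
      · have h := pend ⟨0, hp⟩
        apply ha
        simpa using h
    have hμ1' : μ - 1 ≠ 0 := sub_ne_zero.mpr hμ1
    have hs : ∀ i : Fin t, v (Sum.inr (Sum.inl (i, 0))) + v (Sum.inr (Sum.inl (i, 1))) =
        2 * a / (μ - 1) := by
      intro i
      have e1 := tri i 0
      have e2 := tri' i 0
      have h01 : (0 : Fin 2) + 1 = 1 := rfl
      rw [h01] at e1 e2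
      field_simp
      linear_combination -e1 - e2
    have hpend : ∀ j : Fin p, v (Sum.inr (Sum.inr j)) = a / μ := by
      intro j
      have h := pend j
      field_simp
      linarith
    have hsum1 : (∑ x : Fin t × Fin 2, v (Sum.inr (Sum.inl x))) = t * (2 * a / (μ - 1)) := by
      rw [Fintype.sum_prod_type]
      have h2 : ∀ i : Fin t, (∑ s : Fin 2, v (Sum.inr (Sum.inl (i, s)))) = 2 * a / (μ - 1) := by
        intro i
        rw [Fin.sum_univ_two]
        exact hs i
      rw [Finset.sum_congr rfl fun i _ => h2 i, Finset.sum_const, Finset.card_univ]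
      simp [nsmul_eq_mul]
    have hsum2 : (∑ j : Fin p, v (Sum.inr (Sum.inr j))) = p * (a / μ) := by
      rw [Finset.sum_congr rfl fun j _ => hpend j, Finset.sum_const, Finset.card_univ]
      simp [nsmul_eq_mul]
    rw [hsum1, hsum2] at apex
    left
    have key : a * (μ^3 - μ^2 - (2*(t:ℝ) + (p:ℝ)) * μ + (p:ℝ)) = 0 := by
      field_simp at apex
      linear_combination -a * apex
    rcases mul_eq_zero.mp key with h | h
    · exact absurd h ha
    · exact h


set_option maxHeartbeats 1000000 in
/-- Let `k ≥ 3` and `n ≥ 4k` and `i ∈ {1, 2}`, and let `t = (n − k + i)/2`.  Then the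
spectral radius of `K_i((n−k+i)/2, 0, 0)` — the graph consisting of `(n−k+i)/2` triangles
and `k − (i+1)` pendant edges all sharing one common vertex — is the largest root of
`x³ − x² + (1 − n)x + k − (i+1) = 0`, and it is strictly less than
`√(4n − 2k − 4 + 2√(5k² − 8kn + 4n² − 4k + 4)) / 2`. -/
theorem spectral_radius_Ki_order (k n i t : ℕ) (hk : 3 ≤ k) (hn : 4 * k ≤ n)
    (hi : i = 1 ∨ i = 2) (ht : 2 * t = n - k + i) :
    IsGreatest {x : ℝ | x ^ 3 - x ^ 2 + (1 - (n : ℝ)) * x + (k : ℝ) - ((i : ℝ) + 1) = 0}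
      (specRad (FriendPend t (k - (i + 1)))) ∧
    specRad (FriendPend t (k - (i + 1))) <
      Real.sqrt (4 * (n : ℝ) - 2 * (k : ℝ) - 4 +
        2 * Real.sqrt (5 * (k : ℝ) ^ 2 - 8 * (k : ℝ) * (n : ℝ) + 4 * (n : ℝ) ^ 2
          - 4 * (k : ℝ) + 4)) / 2 := by
  have hik : i + 1 ≤ k := by omega
  set p := k - (i + 1) with hp
  have hnp : 2 * t + p + 1 = n := by omega
  have ht1 : 1 ≤ t := by omega
  have hn12 : 12 ≤ n := by omega
  set N := (n : ℝ) with hNdef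
  have hNcast : N = 2*(t:ℝ) + (p:ℝ) + 1 := by rw [hNdef, ← hnp]; push_cast; ring
  have hKcast : (k:ℝ) - ((i:ℝ) + 1) = (p:ℝ) := by
    have h : p + (i + 1) = k := by omega
    rw [← h]; push_cast; ring
  have hN12 : (12:ℝ) ≤ N := by rw [hNdef]; exact_mod_cast hn12
  have hkN : 4 * (k:ℝ) ≤ N := by rw [hNdef]; exact_mod_cast hn
  have hk3 : (3:ℝ) ≤ (k:ℝ) := by exact_mod_cast hk
  have hpk : (p:ℝ) + 2 ≤ (k:ℝ) := by exact_mod_cast (show p + 2 ≤ k by omega)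
  have hp0 : (0:ℝ) ≤ (p:ℝ) := Nat.cast_nonneg p
  set f : ℝ → ℝ := fun x => x^3 - x^2 + (1 - N) * x + (p:ℝ) with hf
  set S : Set ℝ := {x | f x = 0} with hS
  have hfin : S.Finite := by
    have hSeq : S = {x | Polynomial.IsRoot (Polynomial.X^3 - Polynomial.X^2
        + Polynomial.C (1-N) * Polynomial.X + Polynomial.C (p:ℝ)) x} := by
      ext x
      simp [hS, hf, Polynomial.IsRoot]
    rw [hSeq]
    apply Polynomial.finite_setOf_isRoot
    intro hQ
    have h3 := congrArg (fun q => Polynomial.coeff q 3) hQ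
    simp [Polynomial.coeff_X_pow, Polynomial.coeff_C, Polynomial.coeff_one] at h3
  have hcont : Continuous f := by fun_prop
  have hf1 : f 1 < 0 := by
    show (1:ℝ)^3 - 1^2 + (1 - N) * 1 + (p:ℝ) < 0
    nlinarith
  have hfN : 0 < f N := by
    show (0:ℝ) < N^3 - N^2 + (1 - N) * N + (p:ℝ)
    nlinarith [sq_nonneg (N - 1)]
  obtain ⟨x₀, hx₀mem, hx₀⟩ : ∃ x ∈ Set.Ioo (1:ℝ) N, f x = 0 := by
    have hsub := intermediate_value_Ioo (by linarith : (1:ℝ) ≤ N) hcont.continuousOn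
    obtain ⟨x₀, hx₀, hfx₀⟩ := hsub (⟨hf1, hfN⟩ : (0:ℝ) ∈ Set.Ioo (f 1) (f N))
    exact ⟨x₀, hx₀, hfx₀⟩
  have hne : S.Nonempty := ⟨x₀, hx₀⟩
  set r := sSup S with hr
  have hrS : r ∈ S := hne.csSup_mem hfin
  have hub : ∀ x ∈ S, x ≤ r := fun x hx => le_csSup hfin.bddAbove hx
  have hr1 : 1 < r := lt_of_lt_of_le hx₀mem.1 (hub _ hx₀)
  have hfr : r^3 - r^2 + (1-N)*r + (p:ℝ) = 0 := hrS
  have hrspec : r ∈ spectrum ℝ (adjMat (FriendPend t p)) := by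
    rw [matrix_mem_spectrum_iff']
    refine ⟨Sum.elim (fun _ => r^2 - r) (Sum.elim (fun _ => r) (fun _ => r - 1)), ?_, ?_⟩
    · intro h
      have h0 := congrFun h (Sum.inr (Sum.inl (⟨0, ht1⟩, 0)))
      simp at h0
      linarith
    · funext u
      rcases u with u | (⟨i', s⟩ | j)
      · cases u
        rw [mulVec_apex]
        simp only [Sum.elim_inl, Sum.elim_inr, Finset.sum_const, Finset.card_univ,
          Fintype.card_prod, Fintype.card_fin, nsmul_eq_mul, Pi.smul_apply, smul_eq_mul]
        push_cast
        linear_combination -hfr - r * hNcast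
      · rw [mulVec_tri]
        simp only [Sum.elim_inl, Sum.elim_inr, Pi.smul_apply, smul_eq_mul]
        ring
      · rw [mulVec_pend]
        simp only [Sum.elim_inl, Sum.elim_inr, Pi.smul_apply, smul_eq_mul]
        ring
  have hub_spec : ∀ μ ∈ spectrum ℝ (adjMat (FriendPend t p)), μ ≤ r := by
    intro μ hμ
    obtain ⟨v, hv0, hveq⟩ := (matrix_mem_spectrum_iff' _ _).mp hμ
    rcases eigen_classify ht1 μ v hv0 hveq with h | h | h | h
    · refine hub μ ?_
      show μ^3 - μ^2 + (1 - N) * μ + (p:ℝ) = 0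
      linear_combination h - μ * hNcast
    · rw [h]; linarith
    · rw [h]; linarith
    · rw [h]; linarith
  have hbdd : BddAbove (spectrum ℝ (adjMat (FriendPend t p))) := ⟨r, fun μ hμ => hub_spec μ hμ⟩
  have hspecRad : specRad (FriendPend t p) = r := by
    unfold specRad
    exact le_antisymm (csSup_le ⟨r, hrspec⟩ hub_spec) (le_csSup hbdd hrspec)
  constructor
  · constructor
    · show specRad (FriendPend t p) ^ 3 - specRad (FriendPend t p) ^ 2
        + (1 - N) * specRad (FriendPend t p) + (k:ℝ) - ((i:ℝ)+1) = 0
      rw [hspecRad]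
      linear_combination hfr + hKcast
    · intro x hx
      simp only [Set.mem_setOf_eq] at hx
      rw [hspecRad]
      refine hub x ?_
      show x^3 - x^2 + (1 - N) * x + (p:ℝ) = 0
      linear_combination hx - hKcast
  · rw [hspecRad]
    have hD0 : (0:ℝ) ≤ 5 * (k:ℝ) ^ 2 - 8 * (k:ℝ) * N + 4 * N ^ 2 - 4 * (k:ℝ) + 4 := by
      nlinarith [sq_nonneg (2*N - 2*(k:ℝ)), sq_nonneg ((k:ℝ) - 2)]
    set sD := Real.sqrt (5 * (k:ℝ) ^ 2 - 8 * (k:ℝ) * N + 4 * N ^ 2 - 4 * (k:ℝ) + 4) with hsDdef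
    have hsD1 : 2*N - 2*(k:ℝ) ≤ sD := by
      have h := Real.sqrt_le_sqrt (show (2*N - 2*(k:ℝ))^2 ≤
          5 * (k:ℝ) ^ 2 - 8 * (k:ℝ) * N + 4 * N ^ 2 - 4 * (k:ℝ) + 4 by nlinarith [sq_nonneg ((k:ℝ) - 2)])
      rwa [Real.sqrt_sq (by linarith)] at h
    have hsD2 : sD ≤ 2*N := by
      have h := Real.sqrt_le_sqrt (show 5 * (k:ℝ) ^ 2 - 8 * (k:ℝ) * N + 4 * N ^ 2 - 4 * (k:ℝ) + 4
          ≤ (2*N)^2 by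
        have h1 : (0:ℝ) ≤ (k:ℝ) * (N - 4*(k:ℝ)) :=
          mul_nonneg (by linarith) (by linarith)
        have h2 : (9:ℝ) ≤ (k:ℝ)^2 := by nlinarith
        nlinarith)
      rwa [Real.sqrt_sq (by linarith)] at h
    have hE0 : (0:ℝ) ≤ 4 * N - 2 * (k:ℝ) - 4 + 2 * sD := by linarith
    set B := Real.sqrt (4 * N - 2 * (k:ℝ) - 4 + 2 * sD) / 2 with hBdef
    have hB0 : 0 ≤ B := by positivity
    have hB2 : B^2 = (4 * N - 2 * (k:ℝ) - 4 + 2 * sD) / 4 := by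
      rw [hBdef, div_pow, Real.sq_sqrt hE0]
      norm_num
    have hB2lb : 13*N/8 - 1 ≤ B^2 := by rw [hB2]; linarith
    have hB2ub : B^2 ≤ 2*N := by rw [hB2]; linarith
    have hBlt : B < 5*N/8 := by nlinarith [sq_nonneg (B - 5*N/8)]
    by_contra hcon
    push_neg at hcon
    have h2 : B^2 - B ≤ r^2 - r := by
      nlinarith [mul_nonneg (sub_nonneg.2 hcon) (show (0:ℝ) ≤ r + B - 1 by linarith)]
    have h3 : 0 < r * (r^2 - r - (N-1)) := mul_pos (by linarith) (by linarith)
    have h4 : r * (r^2 - r - (N-1)) = -(p:ℝ) := by linear_combination hfr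
    linarith
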